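/- Consider the scalar recursion x^t = x^{t-1} − η·D·(sign(x^{t-1})/√n − w*) + η·ε^t with w* = 1/√n, constant step size η > 0, drift constant D > 0, and perturbations bounded by |ε^t| ≤ Δ where Δ = 2aρ/η with a = ηD/√n and ρ < 1/2. If x^{t-1} ≥ 0 and x^t < 0, then x^t ≥ −2aρ and x^{t+1} ≥ 2a(1−2ρ) > 0. In particular, every excursion of x^t into the negative region lasts exactly one time step. -/
import Mathlib


/-- The sign function with `sgn 0 = 1`. -/
noncomputable def sgn (x : ℝ) : ℝ := if 0 ≤ x then 1 else -1

theorem one_step_reset_constant_step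
    (n : ℕ) (hn : 0 < n) (η D ρ : ℝ) (hη : 0 < η) (hD : 0 < D)
    (hρ0 : 0 < ρ) (hρ : ρ < 1/2)
    (a : ℝ) (ha : a = η * D / Real.sqrt n)
    (Δ : ℝ) (hΔ : Δ = 2 * a * ρ / η)
    (wstar : ℝ) (hw : wstar = 1 / Real.sqrt n)
    (x ε : ℕ → ℝ) (hε : ∀ t, |ε t| ≤ Δ)
    (hrec : ∀ t, x (t + 1) = x t - η * D * (sgn (x t) / Real.sqrt n - wstar) + η * ε (t + 1))
    (t : ℕ) (hpos : 0 ≤ x t) (hneg : x (t + 1) < 0) :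
    x (t + 1) ≥ -(2 * a * ρ) ∧ x (t + 2) ≥ 2 * a * (1 - 2 * ρ) ∧
      0 < 2 * a * (1 - 2 * ρ) := by
  have hs : (0:ℝ) < Real.sqrt n := Real.sqrt_pos.2 (by exact_mod_cast hn)
  have hapos : 0 < a := by rw [ha]; positivity
  have hΔ' : η * Δ = 2 * a * ρ := by
    rw [hΔ]; field_simp
  have hlb1 : -(η * Δ) ≤ η * ε (t + 1) := by
    have := (abs_le.1 (hε (t + 1))).1
    nlinarith
  have hlb2 : -(η * Δ) ≤ η * ε (t + 2) := by
    have := (abs_le.1 (hε (t + 2))).1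
    nlinarith
  have h1 : x (t + 1) = x t + η * ε (t + 1) := by
    rw [hrec t, sgn, if_pos hpos, hw]; ring
  have hA : x (t + 1) ≥ -(2 * a * ρ) := by
    rw [h1]; nlinarith
  have h2 : x (t + 2) = x (t + 1) + 2 * a + η * ε (t + 2) := by
    have := hrec (t + 1)
    rw [sgn, if_neg (not_le.2 hneg), hw] at this
    rw [show t + 2 = t + 1 + 1 from rfl, this, ha]
    field_simp
    ring
  refine ⟨hA, ?_, by nlinarith⟩
  rw [h2]; nlinarith
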